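/- Let ℓ ≥ k ≥ 1. Then D·(∑_f ∏_{i=0}^{ℓ−1} x_{f(i)}^{2^i}) = N(ℓ,0) in F₂[x_1,…,x_k], where the sum ranges over all surjective functions f : {0,1,…,ℓ−1} → {1,…,k}. (This is the formula for the v_0-action polynomial p_{ℓ,0} of Theorem 4.) -/

import Mathlib

open MvPolynomial

/-- `Vdm k t` is the determinant of the `k × k` matrix whose `(i, j)` entry is `xᵢ ^ t j`,
in `F₂[x₁, …, x_k]`. -/
noncomputable def Vdm (k : ℕ) (t : Fin k → ℕ) : MvPolynomial (Fin k) (ZMod 2) :=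
  Matrix.det (Matrix.of fun i j : Fin k => (X i : MvPolynomial (Fin k) (ZMod 2)) ^ t j)

/-- `D k = V(2^0, 2^1, …, 2^(k-1))`. -/
noncomputable def D (k : ℕ) : MvPolynomial (Fin k) (ZMod 2) :=
  Vdm k fun j => 2 ^ (j : ℕ)

/-- `N k ℓ j` is the Vandermonde determinant whose exponent tuple lists the 2-powers
`2^0, …, 2^(k-1)` with `2^j` omitted, followed by `2^ℓ`. -/
noncomputable def N (k ℓ j : ℕ) : MvPolynomial (Fin k) (ZMod 2) :=
  Vdm k fun i =>
    if (i : ℕ) + 1 < k then (if (i : ℕ) < j then 2 ^ (i : ℕ) else 2 ^ ((i : ℕ) + 1))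
    else 2 ^ ℓ

/- `G k m` is the sum of all monomials of total degree `m` in `x₁, …, x_k` in which
every nonzero exponent is a power of 2. -/
open Classical in
noncomputable def G (k m : ℕ) : MvPolynomial (Fin k) (ZMod 2) :=
  ∑ d : Fin k → Fin (m + 1),
    if (∑ i, (d i : ℕ)) = m ∧ ∀ i, (d i : ℕ) ≠ 0 → ∃ e, (d i : ℕ) = 2 ^ e then
      ∏ i, (X i : MvPolynomial (Fin k) (ZMod 2)) ^ (d i : ℕ)
    else 0

namespace Stmt10Aux

open Finset

abbrev R (k : ℕ) := MvPolynomial (Fin k) (ZMod 2)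

lemma two_pow_sub_one (j : ℕ) : 2 ^ j - 1 = ∑ t : Fin j, 2 ^ (t : ℕ) := by
  induction j with
  | zero => simp
  | succ n ih =>
    rw [Fin.sum_univ_castSucc]
    simp only [Fin.coe_castSucc, Fin.val_last, ← ih]
    have := Nat.one_le_two_pow (n := n)
    have : 2 ^ (n + 1) = 2 * 2 ^ n := by ring
    omega

/-- Frobenius expansion of a power of a subset sum. -/
lemma eS_pow (k : ℕ) (S : Finset (Fin k)) (j : ℕ) :
    (∑ i ∈ S, (X i : R k)) ^ (2 ^ j - 1)
      = ∑ g ∈ Fintype.piFinset (fun _ : Fin j => S),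
          ∏ t : Fin j, (X (g t) : R k) ^ 2 ^ (t : ℕ) := by
  rw [two_pow_sub_one, ← Finset.prod_pow_eq_pow_sum]
  have h : ∀ t : Fin j, (∑ i ∈ S, (X i : R k)) ^ 2 ^ (t : ℕ)
      = ∑ i ∈ S, (X i : R k) ^ 2 ^ (t : ℕ) := fun t => sum_pow_char_pow 2 (t : ℕ) S _
  simp_rw [h]
  exact Finset.prod_univ_sum _ _

lemma card_superset (k : ℕ) (T : Finset (Fin k)) :
    (univ.filter fun S : Finset (Fin k) => T ⊆ S).card = 2 ^ (k - T.card) := by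
  have h : (univ.filter fun S : Finset (Fin k) => T ⊆ S).card = Tᶜ.powerset.card := by
    apply Finset.card_bij' (fun S _ => S \ T) (fun U _ => U ∪ T)
    · intro S hS
      simp only [mem_powerset]
      intro x hx
      simp only [mem_sdiff] at hx
      simp [mem_compl, hx.2]
    · intro U hU
      simp only [mem_filter, mem_univ, true_and]
      exact subset_union_right
    · intro S hS
      simp only [mem_filter, mem_univ, true_and] at hS
      rw [Finset.sdiff_union_of_subset hS]
    · intro U hU
      simp only [mem_powerset] at hU
      apply Finset.union_sdiff_cancel_right
      intro V hV1 hV2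
      intro x hx
      have h1 := hV1 hx
      have h2 := hV2 hx
      have := hU h1
      simp only [mem_compl] at this
      exact absurd h2 this
  rw [h, Finset.card_powerset, Finset.card_compl, Fintype.card_fin]

/-- mod-2 counting: summing over all subsets `S` the sums over functions into `S`
keeps exactly the surjective functions. -/
lemma count (k j : ℕ) (w : (Fin j → Fin k) → R k) :
    ∑ S : Finset (Fin k), ∑ g ∈ Fintype.piFinset (fun _ : Fin j => S), w g
      = ∑ g ∈ univ.filter (fun g : Fin j → Fin k => Function.Surjective g), w g := by
  have h1 : ∀ S : Finset (Fin k), ∑ g ∈ Fintype.piFinset (fun _ : Fin j => S), w g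
      = ∑ g : Fin j → Fin k, if univ.image g ⊆ S then w g else 0 := by
    intro S
    rw [← Finset.sum_filter]
    apply Finset.sum_congr _ (fun _ _ => rfl)
    ext g
    simp [Fintype.mem_piFinset, Finset.image_subset_iff]
  simp_rw [h1]
  rw [Finset.sum_comm]
  have h2 : ∀ g : Fin j → Fin k,
      (∑ S : Finset (Fin k), if univ.image g ⊆ S then w g else 0)
        = if Function.Surjective g then w g else 0 := by
    intro g
    rw [← Finset.sum_filter, Finset.sum_const, card_superset]
    by_cases hs : Function.Surjective g
    · rw [if_pos hs, Finset.image_univ_of_surjective hs, Finset.card_univ, Fintype.card_fin,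
        Nat.sub_self, pow_zero, one_smul]
    · rw [if_neg hs]
      have hlt : (univ.image g).card < k := by
        have hne : univ.image g ≠ univ := by
          intro h
          apply hs
          intro y
          have : y ∈ univ.image g := h ▸ mem_univ y
          simp only [mem_image] at this
          obtain ⟨x, _, hx⟩ := this
          exact ⟨x, hx⟩
        calc (univ.image g).card < univ.card :=
              Finset.card_lt_card (ssubset_of_subset_of_ne (subset_univ _) hne)
          _ = k := by rw [Finset.card_univ, Fintype.card_fin]
      have : (2 ^ (k - (univ.image g).card) : ℕ) • w g
          = ((2 : R k) ^ (k - (univ.image g).card)) * w g := by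
        rw [nsmul_eq_mul]; norm_num
      rw [this]
      have h2z : (2 : R k) = 0 := by
        have : ((2 : ℕ) : R k) = 0 := CharP.cast_eq_zero (R k) 2
        simpa using this
      rw [h2z, zero_pow (by omega), zero_mul]
  simp_rw [h2]
  rw [← Finset.sum_filter]


noncomputable def Erow (k l : ℕ) : Fin (k + 1) → ℕ :=
  fun j => if (j : ℕ) < k then 2 ^ (j : ℕ) else 2 ^ l

noncomputable def Amat (k l : ℕ) (y : R k) : Matrix (Fin (k + 1)) (Fin (k + 1)) (R k) :=
  Matrix.of fun i j => ((Fin.cons y (fun i' : Fin k => (X i' : R k)) : Fin (k + 1) → R k) i) ^ Erow k l j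

lemma minor_castSucc (k l : ℕ) (j : Fin k) :
    Vdm k (fun i => Erow k l (j.castSucc.succAbove i)) = N k l (j : ℕ) := by
  unfold N Vdm
  congr 1
  funext i i'
  simp only [Matrix.of_apply]
  congr 1
  by_cases h : (i' : ℕ) < (j : ℕ)
  · rw [Fin.succAbove_of_castSucc_lt _ _ (by
      rw [Fin.castSucc_lt_castSucc_iff]; exact Fin.lt_def.mpr h)]
    have hi : (i' : ℕ) < k := i'.isLt
    have hj : (j : ℕ) < k := j.isLt
    simp only [Erow, Fin.coe_castSucc]
    split_ifs <;> omega
  · rw [Fin.succAbove_of_le_castSucc _ _ (by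
      rw [Fin.castSucc_le_castSucc_iff]; exact Fin.le_def.mpr (by omega))]
    have hi : (i' : ℕ) < k := i'.isLt
    simp only [Erow, Fin.val_succ]
    split_ifs <;> omega

lemma minor_last (k l : ℕ) :
    Vdm k (fun i => Erow k l ((Fin.last k).succAbove i)) = D k := by
  unfold D Vdm
  congr 1
  funext i i'
  simp only [Matrix.of_apply]
  congr 1
  rw [Fin.succAbove_last]
  simp [Erow, i'.isLt]

lemma laplace (k l : ℕ) (y : R k) :
    (Amat k l y).det
      = (∑ j : Fin k, N k l (j : ℕ) * y ^ 2 ^ (j : ℕ)) + D k * y ^ 2 ^ l := by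
  rw [Matrix.det_succ_row_zero]
  have hneg : (-1 : R k) = 1 := CharTwo.neg_eq 1
  have hterm : ∀ j : Fin (k + 1),
      (-1 : R k) ^ (j : ℕ) * (Amat k l y) 0 j * ((Amat k l y).submatrix Fin.succ j.succAbove).det
        = y ^ Erow k l j * Vdm k (fun i => Erow k l (j.succAbove i)) := by
    intro j
    rw [hneg, one_pow, one_mul]
    have hA0 : (Amat k l y) 0 j = y ^ Erow k l j := by simp [Amat]
    have hsub : ((Amat k l y).submatrix Fin.succ j.succAbove)
        = Matrix.of (fun a b : Fin k => (X a : R k) ^ Erow k l (j.succAbove b)) := by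
      funext a b
      simp [Amat, Matrix.submatrix_apply]
    rw [hA0, hsub]
    rfl
  rw [Finset.sum_congr rfl (fun j _ => hterm j)]
  rw [Fin.sum_univ_castSucc]
  congr 1
  · apply Finset.sum_congr rfl
    intro j _
    rw [minor_castSucc, mul_comm]
    congr 1
    simp [Erow, j.isLt]
  · rw [minor_last, mul_comm]
    congr 1
    simp [Erow]

lemma m_X_eq_zero (k l : ℕ) (i : Fin k) :
    (∑ j : Fin k, N k l (j : ℕ) * (X i : R k) ^ 2 ^ (j : ℕ)) + D k * (X i : R k) ^ 2 ^ l
      = 0 := by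
  rw [← laplace]
  refine Matrix.det_zero_of_row_eq (M := Amat k l (X i)) (i := 0) (j := Fin.succ i)
    (Ne.symm (Fin.succ_ne_zero i)) ?_
  funext j'
  simp [Amat]

noncomputable def mHom (k l : ℕ) : R k →+ R k where
  toFun y := (∑ j : Fin k, N k l (j : ℕ) * y ^ 2 ^ (j : ℕ)) + D k * y ^ 2 ^ l
  map_zero' := by
    have h : ∀ m : ℕ, (0 : R k) ^ 2 ^ m = 0 := fun m => zero_pow (Nat.pow_pos (by norm_num : 0 < 2)).ne'
    simp [h]
  map_add' a b := by
    have h : ∀ m : ℕ, (a + b : R k) ^ 2 ^ m = a ^ 2 ^ m + b ^ 2 ^ m :=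
      fun m => add_pow_char_pow ..
    simp only [h, mul_add]
    rw [Finset.sum_add_distrib]
    ring

lemma mHom_eS (k l : ℕ) (S : Finset (Fin k)) : mHom k l (∑ i ∈ S, (X i : R k)) = 0 := by
  rw [map_sum]
  exact Finset.sum_eq_zero fun i _ => m_X_eq_zero k l i


lemma mHom_apply (k l : ℕ) (y : R k) :
    mHom k l y = (∑ j : Fin k, N k l (j : ℕ) * y ^ 2 ^ (j : ℕ)) + D k * y ^ 2 ^ l := rfl

lemma mul_pow_pred {k : ℕ} (a : R k) {n : ℕ} (hn : n ≠ 0) : a * a ^ (n - 1) = a ^ n := by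
  conv_rhs => rw [show n = 1 + (n - 1) by omega]
  rw [pow_add, pow_one]

noncomputable def u (k l : ℕ) (S : Finset (Fin k)) : R k :=
  (∑ j : Fin k, N k l (j : ℕ) * (∑ i ∈ S, (X i : R k)) ^ (2 ^ (j : ℕ) - 1))
    + D k * (∑ i ∈ S, (X i : R k)) ^ (2 ^ l - 1)

lemma eS_mul_u (k l : ℕ) (S : Finset (Fin k)) :
    (∑ i ∈ S, (X i : R k)) * u k l S = mHom k l (∑ i ∈ S, (X i : R k)) := by
  rw [mHom_apply]
  unfold u
  rw [mul_add, Finset.mul_sum]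
  congr 1
  · apply Finset.sum_congr rfl
    intro j _
    rw [mul_left_comm, mul_pow_pred _ (Nat.pow_pos (by norm_num : 0 < 2)).ne']
  · rw [mul_left_comm, mul_pow_pred _ (Nat.pow_pos (by norm_num : 0 < 2)).ne']

lemma eS_ne_zero (k : ℕ) (S : Finset (Fin k)) (hS : S.Nonempty) :
    (∑ i ∈ S, (X i : R k)) ≠ 0 := by
  obtain ⟨i₀, hi₀⟩ := hS
  intro h
  have h2 := congrArg (eval (fun i : Fin k => if i = i₀ then (1 : ZMod 2) else 0)) h
  rw [map_sum, map_zero] at h2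
  simp only [eval_X] at h2
  rw [Finset.sum_ite_eq' S i₀ (fun _ => (1 : ZMod 2)), if_pos hi₀] at h2
  exact one_ne_zero h2

lemma u_eq_zero (k l : ℕ) (S : Finset (Fin k)) (hS : S.Nonempty) : u k l S = 0 := by
  have h := eS_mul_u k l S
  rw [mHom_eS] at h
  rcases mul_eq_zero.mp h with h' | h'
  · exact absurd h' (eS_ne_zero k S hS)
  · exact h'

end Stmt10Aux

theorem stmt10 (k ℓ : ℕ) (hk : 1 ≤ k) (hℓ : k ≤ ℓ) :
    D k * ∑ f ∈ Finset.univ.filter (fun f : Fin ℓ → Fin k => Function.Surjective f),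
        ∏ i : Fin ℓ, (X (f i) : MvPolynomial (Fin k) (ZMod 2)) ^ (2 ^ (i : ℕ)) =
      N k ℓ 0 := by
  classical
  open Finset Stmt10Aux in
  have hl1 : 1 ≤ ℓ := hk.trans hℓ
  -- the sum of all `u S` picks out only the `S = ∅` term
  have hsum : ∑ S : Finset (Fin k), u k ℓ S = N k ℓ 0 := by
    rw [Finset.sum_eq_single_of_mem ∅ (Finset.mem_univ ∅)
      (fun S _ hne => u_eq_zero k ℓ S (Finset.nonempty_iff_ne_empty.mpr hne))]
    unfold u
    simp only [Finset.sum_empty]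
    have hexpl : (0 : R k) ^ (2 ^ ℓ - 1) = 0 := by
      apply zero_pow
      have : 2 ^ 1 ≤ 2 ^ ℓ := Nat.pow_le_pow_right (by norm_num) hl1
      omega
    rw [hexpl, mul_zero, add_zero]
    rw [Finset.sum_eq_single_of_mem (⟨0, hk⟩ : Fin k) (Finset.mem_univ _) ?_]
    · norm_num
    · intro j _ hj
      have hj0 : (j : ℕ) ≠ 0 := fun h => hj (Fin.ext h)
      have : 2 ^ 1 ≤ 2 ^ (j : ℕ) := Nat.pow_le_pow_right (by norm_num) (by omega)
      rw [zero_pow (by omega), mul_zero]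
  -- exchange the order of summation
  have hswap : ∑ S : Finset (Fin k), u k ℓ S
      = (∑ j : Fin k, N k ℓ (j : ℕ)
            * ∑ S : Finset (Fin k), (∑ i ∈ S, (X i : R k)) ^ (2 ^ (j : ℕ) - 1))
        + D k * ∑ S : Finset (Fin k), (∑ i ∈ S, (X i : R k)) ^ (2 ^ ℓ - 1) := by
    unfold u
    rw [Finset.sum_add_distrib]
    congr 1
    · rw [Finset.sum_comm]
      exact Finset.sum_congr rfl fun j _ => (Finset.mul_sum _ _ _).symm
    · exact (Finset.mul_sum _ _ _).symm
  -- the inner power sums vanish for 1 ≤ j < k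
  have hQj : ∀ j : Fin k, (j : ℕ) ≠ 0 →
      ∑ S : Finset (Fin k), (∑ i ∈ S, (X i : R k)) ^ (2 ^ (j : ℕ) - 1) = 0 := by
    intro j hj
    simp_rw [eS_pow]
    rw [count]
    apply Finset.sum_eq_zero
    intro g hg
    exfalso
    rw [Finset.mem_filter] at hg
    have hcard := Fintype.card_le_of_surjective g hg.2
    simp only [Fintype.card_fin] at hcard
    have := j.isLt
    omega
  have hQ0 : ∀ j : Fin k, (j : ℕ) = 0 →
      ∑ S : Finset (Fin k), (∑ i ∈ S, (X i : R k)) ^ (2 ^ (j : ℕ) - 1) = 0 := by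
    intro j hj
    rw [hj]
    norm_num
    have h2 : ((2 : ℕ) : R k) = 0 := CharP.cast_eq_zero (R k) 2
    exact ⟨by simpa using h2, by omega⟩
  -- the power sum at exponent `2 ^ ℓ - 1` is the surjection sum
  have hQl : ∑ S : Finset (Fin k), (∑ i ∈ S, (X i : R k)) ^ (2 ^ ℓ - 1)
      = ∑ f ∈ Finset.univ.filter (fun f : Fin ℓ → Fin k => Function.Surjective f),
          ∏ i : Fin ℓ, (X (f i) : R k) ^ (2 ^ (i : ℕ)) := by
    simp_rw [eS_pow]
    rw [count]
  rw [hswap] at hsum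
  rw [Finset.sum_eq_zero (fun j _ => by
      by_cases hj : (j : ℕ) = 0
      · rw [hQ0 j hj, mul_zero]
      · rw [hQj j hj, mul_zero]), zero_add, hQl] at hsum
  exact hsum
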